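/- Let F : ℂ → ℂ be continuous on the closed strip 𝒯¹ and holomorphic on its interior. If there exist real numbers a < b such that F(t) = 0 for every t in the open interval (a, b) ⊂ ℝ, then F vanishes identically on 𝒯¹. -/

import Mathlib

open Complex Set Filter intervalIntegral
open scoped Topology Interval

/-- Antiholomorphic reflection of a derivative. -/
lemma hasDerivAt_conj_comp {F : ℂ → ℂ} {d z : ℂ} (h : HasDerivAt F d ((starRingEnd ℂ) z)) :
    HasDerivAt (fun w => (starRingEnd ℂ) (F ((starRingEnd ℂ) w))) ((starRingEnd ℂ) d) z := by
  rw [hasDerivAt_iff_tendsto_slope] at h ⊢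
  have hconj : Tendsto (fun w => (starRingEnd ℂ) w) (𝓝[≠] z) (𝓝[≠] ((starRingEnd ℂ) z)) := by
    rw [tendsto_nhdsWithin_iff]
    refine ⟨(Complex.continuous_conj.tendsto z).mono_left nhdsWithin_le_nhds, ?_⟩
    filter_upwards [self_mem_nhdsWithin] with w hw
    simpa using fun hc => hw ((starRingEnd ℂ).injective hc)
  have : Tendsto (fun w => (starRingEnd ℂ) (slope F ((starRingEnd ℂ) z) ((starRingEnd ℂ) w)))
      (𝓝[≠] z) (𝓝 ((starRingEnd ℂ) d)) :=
    (Complex.continuous_conj.tendsto d).comp (h.comp hconj)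
  refine this.congr' ?_
  filter_upwards [self_mem_nhdsWithin] with w hw
  simp only [slope_def_field]
  rw [eq_comm]
  simp only [map_div₀, map_sub, starRingEnd_self_apply]

lemma abs_sub_le_of_mem_uIoc {u v x : ℝ} (hx : x ∈ Ι u v) : |x - u| ≤ |v - u| := by
  rcases le_total u v with h | h
  · rw [Set.uIoc_of_le h] at hx
    rw [abs_le]
    refine ⟨by linarith [hx.1, le_abs_self (v - u)], by linarith [hx.2, le_abs_self (v - u)]⟩
  · rw [Set.uIoc_of_ge h] at hx
    rw [abs_le]
    refine ⟨by linarith [hx.1, neg_abs_le (v - u)], by linarith [hx.2, neg_abs_le (v - u)]⟩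

/-- The closed strip `𝒯¹ = {z ∈ ℂ : 0 ≤ Im z ≤ 1}`. If `F` is continuous on `𝒯¹`,
holomorphic on its interior, and vanishes on a nonempty open real interval `(a, b)`,
then `F` vanishes identically on `𝒯¹`. -/
theorem strip_vanishes_of_vanishes_on_real_interval
    (F : ℂ → ℂ)
    (hcont : ContinuousOn F {z : ℂ | 0 ≤ z.im ∧ z.im ≤ 1})
    (hdiff : DifferentiableOn ℂ F {z : ℂ | 0 < z.im ∧ z.im < 1})
    (a b : ℝ) (hab : a < b)
    (hvanish : ∀ t : ℝ, a < t → t < b → F (t : ℂ) = 0) :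
    ∀ z : ℂ, 0 ≤ z.im → z.im ≤ 1 → F z = 0 := by
  set S : Set ℂ := {z : ℂ | 0 ≤ z.im ∧ z.im ≤ 1} with hS
  set U : Set ℂ := {z : ℂ | 0 < z.im ∧ z.im < 1} with hU
  have hUopen : IsOpen U := by
    have : U = Complex.im ⁻¹' Ioo 0 1 := by ext z; simp [hU, Set.mem_preimage]
    rw [this]; exact isOpen_Ioo.preimage Complex.continuous_im
  -- geometry of the square
  set t₀ : ℝ := (a + b) / 2 with ht₀
  set s : ℝ := min ((b - a) / 4) (1 / 2) with hs
  have hs0 : 0 < s := by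
    apply lt_min <;> linarith
  have hs4 : s ≤ (b - a) / 4 := min_le_left _ _
  have hs1 : s ≤ 1 / 2 := min_le_right _ _
  have hIccab : ∀ x : ℝ, t₀ - s ≤ x → x ≤ t₀ + s → a < x ∧ x < b := by
    intro x h1 h2; constructor <;> [linarith; linarith]
  -- the reflected function
  set G : ℂ → ℂ := fun z => if 0 ≤ z.im then F z else (starRingEnd ℂ) (F ((starRingEnd ℂ) z))
    with hG
  have hGzero : ∀ z : ℂ, z.im = 0 → t₀ - s ≤ z.re → z.re ≤ t₀ + s → G z = 0 := by
    intro z h0 h1 h2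
    have hz : z = (z.re : ℂ) := Complex.ext (by simp) (by simp [h0])
    obtain ⟨ha', hb'⟩ := hIccab z.re h1 h2
    have : F z = 0 := by rw [hz]; exact hvanish _ ha' hb'
    simp [hG, h0, this]
  -- continuity of G on the closed square
  set Kc : Set ℂ := Icc (t₀ - s) (t₀ + s) ×ℂ Icc (-s) s with hKc
  have hKS : ∀ z : ℂ, z ∈ Kc → 0 ≤ z.im → z ∈ S := by
    intro z hz h0
    rw [Complex.mem_reProdIm] at hz
    exact ⟨h0, le_trans hz.2.2 (by linarith)⟩
  have hGcont : ContinuousOn G Kc := by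
    intro z hzK
    have hzre : t₀ - s ≤ z.re ∧ z.re ≤ t₀ + s := by
      rw [Complex.mem_reProdIm] at hzK; exact ⟨hzK.1.1, hzK.1.2⟩
    have hsub : Kc ⊆ (Kc ∩ {w : ℂ | 0 ≤ w.im}) ∪ (Kc ∩ {w : ℂ | w.im ≤ 0}) := by
      intro w hw
      rcases le_total 0 w.im with h | h
      · exact Or.inl ⟨hw, h⟩
      · exact Or.inr ⟨hw, h⟩
    have h1 : ContinuousWithinAt G (Kc ∩ {w : ℂ | 0 ≤ w.im}) z := by
      rcases le_or_gt 0 z.im with h0 | h0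
      · have : ContinuousWithinAt F (Kc ∩ {w : ℂ | 0 ≤ w.im}) z := by
          refine (hcont.mono ?_) z ⟨hzK, h0⟩
          intro w hw; exact hKS w hw.1 hw.2
        refine this.congr (fun w hw => ?_) (by simp [hG, h0])
        have h0w : 0 ≤ w.im := hw.2
        simp [hG, h0w]
      · apply continuousWithinAt_of_notMem_closure
        intro hcl
        have : z ∈ {w : ℂ | 0 ≤ w.im} := by
          have hclosed : IsClosed {w : ℂ | 0 ≤ w.im} :=
            isClosed_le continuous_const Complex.continuous_im
          exact closure_minimal Set.inter_subset_right hclosed hcl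
        exact absurd this (by simpa using h0)
    have h2 : ContinuousWithinAt G (Kc ∩ {w : ℂ | w.im ≤ 0}) z := by
      rcases le_or_gt z.im 0 with h0 | h0
      · have hR : ContinuousWithinAt (fun w => (starRingEnd ℂ) (F ((starRingEnd ℂ) w)))
            (Kc ∩ {w : ℂ | w.im ≤ 0}) z := by
          refine Complex.continuous_conj.continuousAt.comp_continuousWithinAt ?_
          have hzim : -s ≤ z.im ∧ z.im ≤ s := by
            have := hzK; rw [Complex.mem_reProdIm] at this; exact ⟨this.2.1, this.2.2⟩
          have hmemS : (starRingEnd ℂ) z ∈ S := by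
            refine ⟨by simp; linarith, by simp; linarith⟩
          refine ContinuousWithinAt.comp (hcont _ hmemS)
            Complex.continuous_conj.continuousWithinAt ?_
          intro w hw
          have hw0 : w.im ≤ 0 := hw.2
          have hwK := hw.1
          rw [Complex.mem_reProdIm] at hwK
          have h21 : -s ≤ w.im := hwK.2.1
          refine ⟨by simp; linarith, by simp; linarith⟩
        have hEq : ∀ w ∈ Kc ∩ {w : ℂ | w.im ≤ 0},
            G w = (starRingEnd ℂ) (F ((starRingEnd ℂ) w)) := by
          intro w hw
          rcases lt_or_eq_of_le (show w.im ≤ 0 from hw.2) with h | h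
          · simp [hG, not_le.mpr h]
          · have hw0 : w.im = 0 := h
            have hwre : t₀ - s ≤ w.re ∧ w.re ≤ t₀ + s := by
              have := hw.1; rw [Complex.mem_reProdIm] at this; exact ⟨this.1.1, this.1.2⟩
            have hwc : (starRingEnd ℂ) w = w := by
              rw [Complex.conj_eq_iff_im]; exact hw0
            have hGw : G w = 0 := hGzero w hw0 hwre.1 hwre.2
            have hFw : F w = 0 := by simpa [hG, hw0] using hGw
            rw [hGw, hwc, hFw, map_zero]
        refine hR.congr hEq (hEq z ⟨hzK, h0⟩)
      · apply continuousWithinAt_of_notMem_closure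
        intro hcl
        have : z ∈ {w : ℂ | w.im ≤ 0} := by
          have hclosed : IsClosed {w : ℂ | w.im ≤ 0} :=
            isClosed_le Complex.continuous_im continuous_const
          exact closure_minimal Set.inter_subset_right hclosed hcl
        exact absurd this (by simpa using h0)
      -- end h2
    exact (h1.union h2).mono hsub
  -- differentiability of G off the real axis
  have hGdiffU : ∀ z : ℂ, 0 < z.im → z.im < 1 → DifferentiableAt ℂ G z := by
    intro z h1 h2
    have hF : DifferentiableAt ℂ F z :=
      hdiff.differentiableAt (hUopen.mem_nhds ⟨h1, h2⟩)
    have hopen : IsOpen {w : ℂ | 0 < w.im} := isOpen_lt continuous_const Complex.continuous_im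
    have hev : G =ᶠ[𝓝 z] F := by
      filter_upwards [hopen.mem_nhds h1] with w hw
      simp [hG, le_of_lt hw]
    exact hF.congr_of_eventuallyEq hev
  have hGdiffL : ∀ z : ℂ, -1 < z.im → z.im < 0 → DifferentiableAt ℂ G z := by
    intro z h1 h2
    have hmem : (starRingEnd ℂ) z ∈ U := by
      constructor <;> simp [Complex.conj_im] <;> linarith
    have hF : DifferentiableAt ℂ F ((starRingEnd ℂ) z) :=
      hdiff.differentiableAt (hUopen.mem_nhds hmem)
    have hR := (hasDerivAt_conj_comp hF.hasDerivAt).differentiableAt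
    have hopen : IsOpen {w : ℂ | w.im < 0} := isOpen_lt Complex.continuous_im continuous_const
    have hev : G =ᶠ[𝓝 z] fun w => (starRingEnd ℂ) (F ((starRingEnd ℂ) w)) := by
      filter_upwards [hopen.mem_nhds h2] with w hw
      simp [hG, not_le.mpr hw]
    exact hR.congr_of_eventuallyEq hev
  -- interval integrability helpers
  have hintV : ∀ x : ℝ, x ∈ Icc (t₀ - s) (t₀ + s) → ∀ y₁ y₂ : ℝ, y₁ ∈ Icc (-s) s →
      y₂ ∈ Icc (-s) s → IntervalIntegrable (fun y : ℝ => G ((x : ℂ) + (y : ℂ) * I)) MeasureTheory.volume y₁ y₂ := by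
    intro x hx y₁ y₂ hy₁ hy₂
    apply ContinuousOn.intervalIntegrable
    refine hGcont.comp ?_ ?_
    · exact (continuous_const.add (Complex.continuous_ofReal.mul continuous_const)).continuousOn
    · intro y hy
      rw [Complex.mem_reProdIm]
      constructor
      · simpa using hx
      · have : y ∈ Icc (-s) s := Set.uIcc_subset_Icc hy₁ hy₂ hy
        simpa using this
  have hintH : ∀ y : ℝ, y ∈ Icc (-s) s → ∀ x₁ x₂ : ℝ, x₁ ∈ Icc (t₀ - s) (t₀ + s) →
      x₂ ∈ Icc (t₀ - s) (t₀ + s) →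
      IntervalIntegrable (fun x : ℝ => G ((x : ℂ) + (y : ℂ) * I)) MeasureTheory.volume x₁ x₂ := by
    intro y hy x₁ x₂ hx₁ hx₂
    apply ContinuousOn.intervalIntegrable
    refine hGcont.comp ?_ ?_
    · exact (Complex.continuous_ofReal.add continuous_const).continuousOn
    · intro x hx
      rw [Complex.mem_reProdIm]
      constructor
      · have : x ∈ Icc (t₀ - s) (t₀ + s) := Set.uIcc_subset_Icc hx₁ hx₂ hx
        simpa using this
      · simpa using hy
  -- Cauchy-Goursat on rectangles with one side on ℝ
  have hkey : ∀ x₁ x₂ h : ℝ, x₁ ∈ Icc (t₀ - s) (t₀ + s) → x₂ ∈ Icc (t₀ - s) (t₀ + s) →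
      h ∈ Icc (-s) s →
      (∫ x in x₁..x₂, G ((x : ℂ) + (h : ℂ) * I)) =
        I * (∫ y in (0:ℝ)..h, G ((x₂ : ℂ) + (y : ℂ) * I)) -
        I * (∫ y in (0:ℝ)..h, G ((x₁ : ℂ) + (y : ℂ) * I)) := by
    intro x₁ x₂ h hx₁ hx₂ hh
    have hrect := Complex.integral_boundary_rect_eq_zero_of_differentiable_on_off_countable G
      (x₁ : ℂ) ((x₂ : ℂ) + (h : ℂ) * I) ∅ Set.countable_empty ?_ ?_
    · simp only [Complex.add_re, Complex.add_im, Complex.ofReal_re, Complex.ofReal_im,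
        Complex.mul_re, Complex.mul_im, Complex.I_re, Complex.I_im, mul_zero, mul_one,
        zero_mul, sub_zero, zero_add, add_zero, zero_sub, neg_zero, Complex.ofReal_zero,
        smul_eq_mul] at hrect
      have h0 : (∫ x in x₁..x₂, G (x : ℂ)) = 0 := by
        rw [intervalIntegral.integral_congr (g := fun _ => (0:ℂ)), intervalIntegral.integral_zero]
        intro x hx
        have hx' : x ∈ Icc (t₀ - s) (t₀ + s) := Set.uIcc_subset_Icc hx₁ hx₂ hx
        exact hGzero _ (by simp) (by simpa using hx'.1) (by simpa using hx'.2)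
      rw [h0] at hrect
      linear_combination -hrect
    · -- continuity on the closed rectangle
      refine hGcont.mono ?_
      intro z hz
      rw [Complex.mem_reProdIm] at hz ⊢
      simp only [Complex.add_re, Complex.add_im, Complex.ofReal_re, Complex.ofReal_im,
        Complex.mul_re, Complex.mul_im, Complex.I_re, Complex.I_im, mul_zero, mul_one,
        zero_mul, sub_zero, zero_add, add_zero, zero_sub, neg_zero] at hz
      refine ⟨Set.uIcc_subset_Icc hx₁ hx₂ hz.1, ?_⟩
      have h0s : (0:ℝ) ∈ Icc (-s) s := ⟨by linarith, by linarith⟩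
      exact Set.uIcc_subset_Icc h0s hh hz.2
    · -- differentiability on the open rectangle
      intro z hz
      obtain ⟨hz1, _⟩ := hz
      rw [Complex.mem_reProdIm] at hz1
      simp only [Complex.add_re, Complex.add_im, Complex.ofReal_re, Complex.ofReal_im,
        Complex.mul_re, Complex.mul_im, Complex.I_re, Complex.I_im, mul_zero, mul_one,
        zero_mul, sub_zero, zero_add, add_zero, zero_sub, neg_zero] at hz1
      have him := hz1.2
      have hmax : max 0 h ≤ s := max_le (le_of_lt hs0) hh.2
      have hmin : -s ≤ min 0 h := le_min (by linarith) hh.1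
      rcases lt_trichotomy z.im 0 with hlt | heq | hgt
      · exact hGdiffL z (by have := him.1; nlinarith [hs1]) hlt
      · exfalso
        have h1 : min 0 h < 0 := heq ▸ him.1
        have h2 : 0 < max 0 h := heq ▸ him.2
        rcases le_total h 0 with h' | h'
        · rw [max_eq_left h'] at h2; exact lt_irrefl _ h2
        · rw [min_eq_left h'] at h1; exact lt_irrefl _ h1
      · exact hGdiffU z hgt (by have := him.2; nlinarith [hs1])
  -- the primitive
  set H : ℂ → ℂ := fun z => I * ∫ y in (0:ℝ)..z.im, G ((z.re : ℂ) + (y : ℂ) * I) with hH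
  set Q : Set ℂ := Ioo (t₀ - s) (t₀ + s) ×ℂ Ioo (-s) s with hQ
  have hQopen : IsOpen Q := IsOpen.reProdIm isOpen_Ioo isOpen_Ioo
  have hQKc : Q ⊆ Kc := by
    intro z hz
    rw [Complex.mem_reProdIm] at hz ⊢
    exact ⟨Ioo_subset_Icc_self hz.1, Ioo_subset_Icc_self hz.2⟩
  have hHderiv : ∀ z₀ ∈ Q, HasDerivAt H (G z₀) z₀ := by
    intro z₀ hz₀
    have hz₀' := hz₀
    rw [Complex.mem_reProdIm] at hz₀'
    have hGc : ContinuousAt G z₀ :=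
      hGcont.continuousAt (mem_nhds_iff.mpr ⟨Q, hQKc, hQopen, hz₀⟩)
    rw [hasDerivAt_iff_isLittleO, Asymptotics.isLittleO_iff]
    intro c hc
    obtain ⟨δ, hδ0, hδ⟩ := Metric.continuousAt_iff.mp hGc (c / 2) (by positivity)
    filter_upwards [hQopen.mem_nhds hz₀, Metric.ball_mem_nhds z₀ (by positivity : (0:ℝ) < δ / 2)]
      with w hwQ hwb
    have hwQ' := hwQ
    rw [Complex.mem_reProdIm] at hwQ'
    have hz₀re : z₀.re ∈ Icc (t₀ - s) (t₀ + s) := Ioo_subset_Icc_self hz₀'.1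
    have hz₀im : z₀.im ∈ Icc (-s) s := Ioo_subset_Icc_self hz₀'.2
    have hwre : w.re ∈ Icc (t₀ - s) (t₀ + s) := Ioo_subset_Icc_self hwQ'.1
    have hwim : w.im ∈ Icc (-s) s := Ioo_subset_Icc_self hwQ'.2
    have h0s : (0:ℝ) ∈ Icc (-s) s := ⟨by linarith, by linarith⟩
    -- path decomposition
    have hsplit : (∫ y in (0:ℝ)..w.im, G ((w.re : ℂ) + (y : ℂ) * I)) =
        (∫ y in (0:ℝ)..z₀.im, G ((w.re : ℂ) + (y : ℂ) * I)) +
        (∫ y in z₀.im..w.im, G ((w.re : ℂ) + (y : ℂ) * I)) :=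
      (intervalIntegral.integral_add_adjacent_intervals
        (hintV w.re hwre 0 z₀.im h0s hz₀im) (hintV w.re hwre z₀.im w.im hz₀im hwim)).symm
    have hk := hkey z₀.re w.re z₀.im hz₀re hwre hz₀im
    have hE1 : (∫ x in z₀.re..w.re, (G ((x : ℂ) + (z₀.im : ℂ) * I) - G z₀)) =
        (∫ x in z₀.re..w.re, G ((x : ℂ) + (z₀.im : ℂ) * I)) - ((w.re : ℂ) - z₀.re) * G z₀ := by
      rw [intervalIntegral.integral_sub (hintH z₀.im hz₀im z₀.re w.re hz₀re hwre)
        intervalIntegrable_const, intervalIntegral.integral_const]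
      rw [Complex.real_smul]
      push_cast
      ring
    have hE2 : (∫ y in z₀.im..w.im, (G ((w.re : ℂ) + (y : ℂ) * I) - G z₀)) =
        (∫ y in z₀.im..w.im, G ((w.re : ℂ) + (y : ℂ) * I)) - ((w.im : ℂ) - z₀.im) * G z₀ := by
      rw [intervalIntegral.integral_sub (hintV w.re hwre z₀.im w.im hz₀im hwim)
        intervalIntegrable_const, intervalIntegral.integral_const]
      rw [Complex.real_smul]
      push_cast
      ring
    have hwz : (w : ℂ) - z₀ = ((w.re : ℂ) - z₀.re) + ((w.im : ℂ) - z₀.im) * I := by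
      apply Complex.ext <;> simp
    have hid : H w - H z₀ - (w - z₀) • G z₀ =
        (∫ x in z₀.re..w.re, (G ((x : ℂ) + (z₀.im : ℂ) * I) - G z₀)) +
        I * (∫ y in z₀.im..w.im, (G ((w.re : ℂ) + (y : ℂ) * I) - G z₀)) := by
      simp only [hH, smul_eq_mul]
      rw [hsplit]
      linear_combination -hk - hE1 - I * hE2 - G z₀ * hwz
    rw [hid]
    -- estimates
    have hdist : dist w z₀ < δ / 2 := hwb
    have hnorm : ‖w - z₀‖ < δ / 2 := by rwa [← dist_eq_norm]
    have hre_le : |w.re - z₀.re| ≤ ‖w - z₀‖ := by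
      have := Complex.abs_re_le_norm (w - z₀)
      simpa [Complex.sub_re] using this
    have him_le : |w.im - z₀.im| ≤ ‖w - z₀‖ := by
      have := Complex.abs_im_le_norm (w - z₀)
      simpa [Complex.sub_im] using this
    have hb1 : ‖∫ x in z₀.re..w.re, (G ((x : ℂ) + (z₀.im : ℂ) * I) - G z₀)‖ ≤
        (c / 2) * |w.re - z₀.re| := by
      apply intervalIntegral.norm_integral_le_of_norm_le_const
      intro x hx
      have hx' : |x - z₀.re| ≤ |w.re - z₀.re| := abs_sub_le_of_mem_uIoc hx
      have hptd : dist ((x : ℂ) + (z₀.im : ℂ) * I) z₀ < δ := by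
        have : ((x : ℂ) + (z₀.im : ℂ) * I) - z₀ = ((x - z₀.re : ℝ) : ℂ) := by
          apply Complex.ext <;> simp
        rw [Complex.dist_eq, this, Complex.norm_real, Real.norm_eq_abs]
        calc |x - z₀.re| ≤ |w.re - z₀.re| := hx'
          _ ≤ ‖w - z₀‖ := hre_le
          _ < δ / 2 := hnorm
          _ < δ := by linarith
      have := hδ hptd
      rw [Complex.dist_eq] at this
      exact le_of_lt (by simpa using this)
    have hb2 : ‖∫ y in z₀.im..w.im, (G ((w.re : ℂ) + (y : ℂ) * I) - G z₀)‖ ≤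
        (c / 2) * |w.im - z₀.im| := by
      apply intervalIntegral.norm_integral_le_of_norm_le_const
      intro y hy
      have hy' : |y - z₀.im| ≤ |w.im - z₀.im| := abs_sub_le_of_mem_uIoc hy
      have hptd : dist ((w.re : ℂ) + (y : ℂ) * I) z₀ < δ := by
        have heq : ((w.re : ℂ) + (y : ℂ) * I) - z₀ =
            ((w.re - z₀.re : ℝ) : ℂ) + ((y - z₀.im : ℝ) : ℂ) * I := by
          apply Complex.ext <;> simp
        rw [Complex.dist_eq, heq]
        calc ‖((w.re - z₀.re : ℝ) : ℂ) + ((y - z₀.im : ℝ) : ℂ) * I‖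
            ≤ ‖((w.re - z₀.re : ℝ) : ℂ)‖ +
              ‖((y - z₀.im : ℝ) : ℂ) * I‖ := norm_add_le _ _
          _ = |w.re - z₀.re| + |y - z₀.im| := by
              rw [norm_mul, Complex.norm_I, mul_one, Complex.norm_real, Real.norm_eq_abs,
                Complex.norm_real, Real.norm_eq_abs]
          _ ≤ ‖w - z₀‖ + |w.im - z₀.im| := add_le_add hre_le hy'
          _ ≤ ‖w - z₀‖ + ‖w - z₀‖ := by linarith [him_le]
          _ < δ := by linarith [hnorm]
      have := hδ hptd
      rw [Complex.dist_eq] at this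
      exact le_of_lt (by simpa using this)
    calc ‖(∫ x in z₀.re..w.re, (G ((x : ℂ) + (z₀.im : ℂ) * I) - G z₀)) +
          I * (∫ y in z₀.im..w.im, (G ((w.re : ℂ) + (y : ℂ) * I) - G z₀))‖
        ≤ ‖∫ x in z₀.re..w.re, (G ((x : ℂ) + (z₀.im : ℂ) * I) - G z₀)‖ +
          ‖I * (∫ y in z₀.im..w.im, (G ((w.re : ℂ) + (y : ℂ) * I) - G z₀))‖ := norm_add_le _ _
      _ ≤ (c / 2) * |w.re - z₀.re| + (c / 2) * |w.im - z₀.im| := by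
          rw [norm_mul, Complex.norm_I, one_mul]
          exact add_le_add hb1 hb2
      _ ≤ (c / 2) * ‖w - z₀‖ + (c / 2) * ‖w - z₀‖ := by
          have h1 : (0:ℝ) ≤ c / 2 := by positivity
          gcongr
      _ = c * ‖w - z₀‖ := by ring
  -- H is analytic on Q and vanishes on the diameter, hence on Q
  have hHdiff : DifferentiableOn ℂ H Q :=
    fun z hz => ((hHderiv z hz).differentiableAt).differentiableWithinAt
  have hHanal : AnalyticOnNhd ℂ H Q := hHdiff.analyticOnNhd hQopen
  have hQconv : Convex ℝ Q := by
    have : Q = (Complex.re ⁻¹' Ioo (t₀ - s) (t₀ + s)) ∩ (Complex.im ⁻¹' Ioo (-s) s) := by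
      ext z; rw [hQ, Complex.mem_reProdIm]; rfl
    rw [this]
    exact ((convex_Ioo _ _).linear_preimage Complex.reLm).inter
      ((convex_Ioo _ _).linear_preimage Complex.imLm)
  have hH0 : ∀ z : ℂ, z.im = 0 → H z = 0 := by
    intro z h0
    simp [hH, h0]
  have ht₀Q : (t₀ : ℂ) ∈ Q := by
    rw [hQ, Complex.mem_reProdIm]
    constructor <;> simp <;> first | (constructor <;> linarith) | linarith
  have hfreq : ∃ᶠ z in 𝓝[≠] (t₀ : ℂ), H z = 0 := by
    rw [Filter.frequently_iff]
    intro V hV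
    obtain ⟨ε, hε0, hε⟩ := Metric.mem_nhdsWithin_iff.mp hV
    refine ⟨((t₀ + ε / 2 : ℝ) : ℂ), hε ⟨?_, ?_⟩, hH0 _ (by simp)⟩
    · rw [Metric.mem_ball, Complex.dist_eq,
        show ((t₀ + ε / 2 : ℝ) : ℂ) - (t₀ : ℂ) = ((ε / 2 : ℝ) : ℂ) by push_cast; ring,
        Complex.norm_real, Real.norm_eq_abs, abs_of_pos (by linarith)]
      linarith
    · simp only [Set.mem_compl_iff, Set.mem_singleton_iff]
      intro hcontra
      have := congrArg Complex.re hcontra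
      simp at this
      linarith
  have hHzero : Set.EqOn H 0 Q :=
    hHanal.eqOn_zero_of_preconnected_of_frequently_eq_zero hQconv.isPreconnected ht₀Q hfreq
  -- hence G vanishes on Q
  have hGzeroQ : ∀ z ∈ Q, G z = 0 := by
    intro z hz
    have h1 : deriv H z = G z := (hHderiv z hz).deriv
    have h2 : H =ᶠ[𝓝 z] 0 := by
      filter_upwards [hQopen.mem_nhds hz] with w hw
      exact hHzero hw
    rw [h2.deriv_eq, show (0 : ℂ → ℂ) = fun _ => (0 : ℂ) from rfl, deriv_const] at h1
    exact h1.symm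
  -- hence F vanishes on the open upper part of Q, and by the identity theorem on U
  have hz₁ : (t₀ : ℂ) + (s / 2 : ℝ) * I ∈ Q ∩ {z : ℂ | 0 < z.im} := by
    constructor
    · rw [hQ, Complex.mem_reProdIm]
      constructor <;> simp <;> first | (constructor <;> linarith) | linarith
    · simp
      linarith
  have hz₁U : (t₀ : ℂ) + (s / 2 : ℝ) * I ∈ U := by
    constructor <;> simp <;> linarith
  have hFanal : AnalyticOnNhd ℂ F U := hdiff.analyticOnNhd hUopen
  have hev : F =ᶠ[𝓝 ((t₀ : ℂ) + (s / 2 : ℝ) * I)] 0 := by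
    have hopen : IsOpen (Q ∩ {z : ℂ | 0 < z.im}) :=
      hQopen.inter (isOpen_lt continuous_const Complex.continuous_im)
    filter_upwards [hopen.mem_nhds hz₁] with w hw
    have hwim : 0 < w.im := hw.2
    have := hGzeroQ w hw.1
    simpa [hG, le_of_lt hwim] using this
  have hFzeroU : Set.EqOn F 0 U := by
    have hUconv : Convex ℝ U := (convex_halfSpace_im_gt 0).inter (convex_halfSpace_im_lt 1)
    exact hFanal.eqOn_zero_of_preconnected_of_eventuallyEq_zero hUconv.isPreconnected hz₁U hev
  -- boundary values by continuity
  intro z h0 h1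
  rcases lt_or_eq_of_le h0 with h0' | h0'
  · rcases lt_or_eq_of_le h1 with h1' | h1'
    · exact hFzeroU ⟨h0', h1'⟩
    · -- im z = 1 : approach from below
      have hcw : ContinuousWithinAt F S z := hcont z ⟨h0, h1⟩
      have htend : Filter.Tendsto (fun ε : ℝ => z - (ε : ℂ) * I) (𝓝[>] (0:ℝ)) (𝓝[S] z) := by
        rw [tendsto_nhdsWithin_iff]
        constructor
        · have hcont' : Continuous fun ε : ℝ => z - (ε : ℂ) * I :=
            continuous_const.sub (Complex.continuous_ofReal.mul continuous_const)
          have : Filter.Tendsto (fun ε : ℝ => z - (ε : ℂ) * I) (𝓝 (0:ℝ)) (𝓝 z) := by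
            simpa using hcont'.tendsto 0
          exact this.mono_left nhdsWithin_le_nhds
        · filter_upwards [self_mem_nhdsWithin,
            eventually_nhdsWithin_of_eventually_nhds (eventually_lt_nhds one_pos)] with ε hε hε1
          simp only [hS, Set.mem_setOf_eq, Complex.sub_im, Complex.mul_im,
            Complex.ofReal_re, Complex.ofReal_im, Complex.I_re, Complex.I_im,
            mul_one, mul_zero, zero_mul, add_zero, zero_add]
          refine ⟨by linarith [Set.mem_Ioi.mp hε], by linarith [Set.mem_Ioi.mp hε]⟩
      have hcomp : Filter.Tendsto (fun ε : ℝ => F (z - (ε : ℂ) * I)) (𝓝[>] (0:ℝ)) (𝓝 (F z)) :=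
        hcw.tendsto.comp htend
      have hzero : (fun ε : ℝ => F (z - (ε : ℂ) * I)) =ᶠ[𝓝[>] (0:ℝ)] fun _ => 0 := by
        filter_upwards [self_mem_nhdsWithin,
          eventually_nhdsWithin_of_eventually_nhds (eventually_lt_nhds one_pos)] with ε hε hε1
        refine hFzeroU ?_
        simp only [hU, Set.mem_setOf_eq, Complex.sub_im, Complex.mul_im,
          Complex.ofReal_re, Complex.ofReal_im, Complex.I_re, Complex.I_im,
          mul_one, mul_zero, zero_mul, add_zero, zero_add]
        refine ⟨by linarith [Set.mem_Ioi.mp hε], by linarith [Set.mem_Ioi.mp hε]⟩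
      have : Filter.Tendsto (fun _ : ℝ => (0:ℂ)) (𝓝[>] (0:ℝ)) (𝓝 (F z)) := hcomp.congr' hzero
      exact tendsto_nhds_unique this tendsto_const_nhds
  · -- im z = 0 : approach from above
    have hcw : ContinuousWithinAt F S z := hcont z ⟨h0, h1⟩
    have htend : Filter.Tendsto (fun ε : ℝ => z + (ε : ℂ) * I) (𝓝[>] (0:ℝ)) (𝓝[S] z) := by
      rw [tendsto_nhdsWithin_iff]
      constructor
      · have hcont' : Continuous fun ε : ℝ => z + (ε : ℂ) * I :=
          continuous_const.add (Complex.continuous_ofReal.mul continuous_const)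
        have : Filter.Tendsto (fun ε : ℝ => z + (ε : ℂ) * I) (𝓝 (0:ℝ)) (𝓝 z) := by
          simpa using hcont'.tendsto 0
        exact this.mono_left nhdsWithin_le_nhds
      · filter_upwards [self_mem_nhdsWithin,
          eventually_nhdsWithin_of_eventually_nhds (eventually_lt_nhds one_pos)] with ε hε hε1
        simp only [hS, Set.mem_setOf_eq, Complex.add_im, Complex.mul_im,
          Complex.ofReal_re, Complex.ofReal_im, Complex.I_re, Complex.I_im,
          mul_one, mul_zero, zero_mul, add_zero, zero_add]
        refine ⟨by linarith [Set.mem_Ioi.mp hε], by linarith [Set.mem_Ioi.mp hε]⟩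
    have hcomp : Filter.Tendsto (fun ε : ℝ => F (z + (ε : ℂ) * I)) (𝓝[>] (0:ℝ)) (𝓝 (F z)) :=
      hcw.tendsto.comp htend
    have hzero : (fun ε : ℝ => F (z + (ε : ℂ) * I)) =ᶠ[𝓝[>] (0:ℝ)] fun _ => 0 := by
      filter_upwards [self_mem_nhdsWithin,
        eventually_nhdsWithin_of_eventually_nhds (eventually_lt_nhds one_pos)] with ε hε hε1
      refine hFzeroU ?_
      simp only [hU, Set.mem_setOf_eq, Complex.add_im, Complex.mul_im,
        Complex.ofReal_re, Complex.ofReal_im, Complex.I_re, Complex.I_im,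
        mul_one, mul_zero, zero_mul, add_zero, zero_add]
      refine ⟨by linarith [Set.mem_Ioi.mp hε], by linarith [Set.mem_Ioi.mp hε]⟩
    have : Filter.Tendsto (fun _ : ℝ => (0:ℂ)) (𝓝[>] (0:ℝ)) (𝓝 (F z)) := hcomp.congr' hzero
    exact tendsto_nhds_unique this tendsto_const_nhds
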